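/- Let M be an m×m real matrix, set n = 2m, and let A = [[0, M],[Mᵀ, 0]] be the n×n symmetric block matrix. Then Δ(A) = 2^n · (det M)² · Δ(MᵀM)². -/

import Mathlib

open Matrix Polynomial
open scoped Classical

/-- An enumeration of the complex roots (with multiplicity) of a polynomial that has
exactly `n` roots, obtained by choice (and junk otherwise). -/
noncomputable def rootsEnum (n : ℕ) (f : Polynomial ℂ) : Fin n → ℂ :=
  if h : ∃ α : Fin n → ℂ, f.roots = Multiset.map α Finset.univ.val then h.choose
  else fun _ => 0

/-- The discriminant `∏_{i<j} (αᵢ - αⱼ)²` of a polynomial with `n` complex roots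
`α₁, …, αₙ` listed with multiplicity. -/
noncomputable def polyDisc (n : ℕ) (f : Polynomial ℂ) : ℂ :=
  ∏ i : Fin n, ∏ j ∈ Finset.univ.filter (fun j => i < j),
    (rootsEnum n f i - rootsEnum n f j) ^ 2

/- ### Auxiliary development -/

/-- The off-diagonal product `∏_i ∏_{j ≠ i} (f i - f j)`. -/
noncomputable def Od {ι : Type*} [Fintype ι] [DecidableEq ι] (f : ι → ℂ) : ℂ :=
  ∏ i, ∏ j ∈ Finset.univ \ {i}, (f i - f j)

/-- Multiset version of the off-diagonal product. -/
noncomputable def msD (S : Multiset ℂ) : ℂ :=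
  (S.map (fun r => ((S.erase r).map (fun a => r - a)).prod)).prod

lemma map_erase_eq {ι : Type*} [DecidableEq ι] (f : ι → ℂ) (s : Multiset ι) {i : ι}
    (h : i ∈ s) : (s.map f).erase (f i) = (s.erase i).map f := by
  conv_lhs => rw [← Multiset.cons_erase h]
  rw [Multiset.map_cons, Multiset.erase_cons_head]

lemma Od_eq_msD {ι : Type*} [Fintype ι] [DecidableEq ι] (f : ι → ℂ) :
    Od f = msD (Multiset.map f Finset.univ.val) := by
  rw [Od, msD, Multiset.map_map, ← Finset.prod_eq_multiset_prod]
  refine Finset.prod_congr rfl fun i _ => ?_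
  have h1 : (Multiset.map f Finset.univ.val).erase (f i)
      = (Finset.univ.val.erase i).map f :=
    map_erase_eq f _ (Finset.mem_univ_val _)
  have h2 : (Finset.univ \ {i} : Finset ι).val = Finset.univ.val.erase i := by
    rw [Finset.sdiff_singleton_eq_erase, Finset.erase_val]
  show _ = (Multiset.map (fun a => f i - a) ((Multiset.map f Finset.univ.val).erase (f i))).prod
  rw [Finset.prod_eq_multiset_prod, h1, h2, Multiset.map_map]
  rfl

lemma Od_congr {ι κ : Type*} [Fintype ι] [DecidableEq ι] [Fintype κ] [DecidableEq κ]
    (f : ι → ℂ) (g : κ → ℂ)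
    (h : Multiset.map f Finset.univ.val = Multiset.map g Finset.univ.val) :
    Od f = Od g := by
  rw [Od_eq_msD, Od_eq_msD, h]

/-- The number of pairs `i < j` in `Fin n`. -/
def Kn (n : ℕ) : ℕ := ∑ i : Fin n, (Finset.univ.filter (fun j => i < j)).card

lemma Kn_two_mul (n : ℕ) : Kn n * 2 = n * (n - 1) := by
  have hc : ∀ i : Fin n, (Finset.univ.filter (fun j => i < j)).card = n - 1 - (i : ℕ) := by
    intro i
    have : (Finset.univ.filter (fun j => i < j)) = Finset.Ioi i := by ext j; simp
    rw [this, Fin.card_Ioi]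
  have h : Kn n = ∑ i ∈ Finset.range n, (n - 1 - i) := by
    rw [Kn]
    simp only [hc]
    exact Fin.sum_univ_eq_sum_range (fun k => n - 1 - k) n
  rw [h, Finset.sum_range_reflect (fun i => i) n, Finset.sum_range_id_mul_two]

lemma Od_eq_sign_mul {n : ℕ} (f : Fin n → ℂ) :
    Od f = (-1) ^ Kn n *
      ∏ i : Fin n, ∏ j ∈ Finset.univ.filter (fun j => i < j), (f i - f j) ^ 2 := by
  have hsplit : ∀ i : Fin n, (Finset.univ \ {i} : Finset (Fin n))
      = (Finset.univ.filter (fun j => i < j)) ∪ (Finset.univ.filter (fun j => j < i)) := by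
    intro i
    ext j
    simp only [Finset.mem_sdiff, Finset.mem_union, Finset.mem_filter, Finset.mem_univ,
      true_and, Finset.mem_singleton]
    omega
  have hdisj : ∀ i : Fin n, Disjoint (Finset.univ.filter (fun j => i < j))
      (Finset.univ.filter (fun j => j < i)) := by
    intro i
    rw [Finset.disjoint_left]
    intro j hj1 hj2
    simp only [Finset.mem_filter] at hj1 hj2
    exact absurd hj2.2 (not_lt_of_gt hj1.2)
  set A := ∏ i : Fin n, ∏ j ∈ Finset.univ.filter (fun j => i < j), (f i - f j) with hA
  have step1 : Od f = A * ∏ i : Fin n, ∏ j ∈ Finset.univ.filter (fun j => j < i), (f i - f j) := by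
    rw [Od, ← Finset.prod_mul_distrib]
    refine Finset.prod_congr rfl fun i _ => ?_
    rw [hsplit i, Finset.prod_union (hdisj i)]
  have step2 : (∏ i : Fin n, ∏ j ∈ Finset.univ.filter (fun j => j < i), (f i - f j))
      = ∏ i : Fin n, ∏ j ∈ Finset.univ.filter (fun j => i < j), (f j - f i) := by
    refine Finset.prod_comm' ?_
    intro x y
    simp only [Finset.mem_univ, Finset.mem_filter, true_and, and_true]
  have step3 : (∏ i : Fin n, ∏ j ∈ Finset.univ.filter (fun j => i < j), (f j - f i))
      = (-1) ^ Kn n * A := by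
    have : ∀ i : Fin n, (∏ j ∈ Finset.univ.filter (fun j => i < j), (f j - f i))
        = (-1) ^ (Finset.univ.filter (fun j => i < j)).card
          * ∏ j ∈ Finset.univ.filter (fun j => i < j), (f i - f j) := by
      intro i
      rw [← Finset.prod_const, ← Finset.prod_mul_distrib]
      refine Finset.prod_congr rfl fun j _ => by ring
    rw [Finset.prod_congr rfl fun i _ => this i, Finset.prod_mul_distrib,
      Finset.prod_pow_eq_pow_sum, hA, Kn]
  have step4 : (∏ i : Fin n, ∏ j ∈ Finset.univ.filter (fun j => i < j), (f i - f j) ^ 2)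
      = A ^ 2 := by
    rw [hA, ← Finset.prod_pow]
    exact Finset.prod_congr rfl fun i _ => by rw [Finset.prod_pow]
  rw [step1, step2, step3, step4]
  ring

lemma exists_enum (n : ℕ) (s : Multiset ℂ) (h : Multiset.card s = n) :
    ∃ f : Fin n → ℂ, s = Multiset.map f Finset.univ.val := by
  have hl : s.toList.length = n := by rw [Multiset.length_toList, h]
  refine ⟨s.toList.get ∘ finCongr hl.symm, ?_⟩
  have base : (↑s.toList : Multiset ℂ) = Multiset.map s.toList.get Finset.univ.val := by
    rw [Fin.univ_val_map, List.ofFn_get]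
  conv_lhs => rw [← Multiset.coe_toList s, base]
  rw [← Multiset.map_map]
  congr 1
  exact (Multiset.map_univ_val_equiv (finCongr hl.symm)).symm

lemma polyDisc_eq {n : ℕ} (f : Polynomial ℂ) {ι : Type*} [Fintype ι] [DecidableEq ι]
    (α : ι → ℂ) (h : f.roots = Multiset.map α Finset.univ.val)
    (hcard : Fintype.card ι = n) :
    polyDisc n f = (-1) ^ Kn n * Od α := by
  have hex : ∃ β : Fin n → ℂ, f.roots = Multiset.map β Finset.univ.val := by
    refine exists_enum n _ ?_
    rw [h, Multiset.card_map, ← Finset.card_def, Finset.card_univ, hcard]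
  have hre : rootsEnum n f = hex.choose := dif_pos hex
  have hOd : Od hex.choose = Od α :=
    Od_congr _ _ (by rw [← hex.choose_spec, h])
  have hsign := Od_eq_sign_mul hex.choose
  have hsq : ((-1 : ℂ) ^ Kn n) * ((-1 : ℂ) ^ Kn n) = 1 := by
    rw [← pow_add]
    exact Even.neg_one_pow ⟨Kn n, rfl⟩
  rw [polyDisc]
  simp only [hre]
  rw [← hOd, hsign, ← mul_assoc, hsq, one_mul]

lemma prod_sdiff_ite {ι : Type*} [Fintype ι] [DecidableEq ι] (x : ι) (h : ι → ℂ) :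
    ∏ y ∈ Finset.univ \ {x}, h y = ∏ y, (if y = x then 1 else h y) := by
  rw [Finset.prod_eq_mul_prod_sdiff_singleton_of_mem (Finset.mem_univ x)
    (fun y => if y = x then 1 else h y), if_pos rfl, one_mul]
  refine Finset.prod_congr rfl fun y hy => ?_
  rw [if_neg (by simpa using (Finset.mem_sdiff.mp hy).2)]

lemma Od_sum {m : ℕ} (σ : Fin m → ℂ) :
    Od (Sum.elim σ (fun i => -σ i)) =
      (-1) ^ (m * m) * (Od σ * ∏ i, ∏ j, (σ i + σ j)) ^ 2 := by
  set g : Fin m ⊕ Fin m → ℂ := Sum.elim σ (fun i => -σ i) with hg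
  have key : Od g = ∏ x : Fin m ⊕ Fin m, ∏ y : Fin m ⊕ Fin m,
      (if y = x then 1 else g x - g y) :=
    Finset.prod_congr rfl fun x _ => prod_sdiff_ite x _
  rw [key, Fintype.prod_sum_type]
  have hinl : ∀ i : Fin m,
      (∏ y : Fin m ⊕ Fin m, (if y = Sum.inl i then 1 else g (Sum.inl i) - g y))
      = (∏ j ∈ Finset.univ \ {i}, (σ i - σ j)) * ∏ j, (σ i + σ j) := by
    intro i
    rw [Fintype.prod_sum_type]
    congr 1
    · rw [prod_sdiff_ite i (fun j => σ i - σ j)]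
      exact Finset.prod_congr rfl fun j _ => by simp [hg]
    · exact Finset.prod_congr rfl fun j _ => by simp [hg, sub_neg_eq_add]
  have hinr : ∀ i : Fin m,
      (∏ y : Fin m ⊕ Fin m, (if y = Sum.inr i then 1 else g (Sum.inr i) - g y))
      = (∏ j, (-1) * (σ i + σ j)) * ∏ j ∈ Finset.univ \ {i}, (σ j - σ i) := by
    intro i
    rw [Fintype.prod_sum_type]
    congr 1
    · refine Finset.prod_congr rfl fun j _ => by simp [hg]; ring
    · rw [prod_sdiff_ite i (fun j => σ j - σ i)]
      refine Finset.prod_congr rfl fun j _ => by simp [hg, neg_add_eq_sub]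
  rw [Finset.prod_congr rfl fun i _ => hinl i, Finset.prod_congr rfl fun i _ => hinr i,
    Finset.prod_mul_distrib, Finset.prod_mul_distrib]
  have hT4 : (∏ i, ∏ j ∈ Finset.univ \ {i}, (σ j - σ i)) = Od σ := by
    rw [Od]
    refine (Finset.prod_comm' ?_).symm
    intro x y
    simp only [Finset.mem_univ, true_and, and_true, Finset.mem_sdiff, Finset.mem_singleton]
    exact ⟨fun h => Ne.symm h, fun h => Ne.symm h⟩
  have hT3 : (∏ i, ∏ j, ((-1 : ℂ) * (σ i + σ j))) = (-1) ^ (m * m) * ∏ i, ∏ j, (σ i + σ j) := by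
    simp only [Finset.prod_mul_distrib, Finset.prod_const, Finset.card_univ, Fintype.card_fin]
    rw [← pow_mul]
  rw [hT4, hT3, Od]
  ring

lemma G_split {m : ℕ} (σ : Fin m → ℂ) :
    ∏ i, ∏ j, (σ i + σ j)
      = 2 ^ m * (∏ i, σ i) * ∏ i, ∏ j ∈ Finset.univ \ {i}, (σ i + σ j) := by
  have h : ∀ i, (∏ j, (σ i + σ j)) = (2 * σ i) * ∏ j ∈ Finset.univ \ {i}, (σ i + σ j) := by
    intro i
    rw [Finset.prod_eq_mul_prod_sdiff_singleton_of_mem (Finset.mem_univ i) (fun j => σ i + σ j),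
      ← two_mul]
  rw [Finset.prod_congr rfl fun i _ => h i, Finset.prod_mul_distrib, Finset.prod_mul_distrib,
    Finset.prod_const, Finset.card_univ, Fintype.card_fin]

lemma Od_sq {m : ℕ} (σ : Fin m → ℂ) :
    Od (fun i => σ i ^ 2) = Od σ * ∏ i, ∏ j ∈ Finset.univ \ {i}, (σ i + σ j) := by
  rw [Od, Od, ← Finset.prod_mul_distrib]
  refine Finset.prod_congr rfl fun i _ => ?_
  rw [← Finset.prod_mul_distrib]
  exact Finset.prod_congr rfl fun j _ => by ring

lemma roots_prod_X_sub_C' {ι : Type*} [Fintype ι] (a : ι → ℂ) :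
    (∏ i, (X - C (a i))).roots = Multiset.map a Finset.univ.val := by
  have h : (∏ i, (X - C (a i)))
      = (Multiset.map (fun r => X - C r) (Multiset.map a Finset.univ.val)).prod := by
    rw [Multiset.map_map, Finset.prod_eq_multiset_prod]
    rfl
  rw [h, Polynomial.roots_multiset_prod_X_sub_C]

lemma sign_cancel (m : ℕ) : ((-1 : ℂ)) ^ (Kn (2 * m)) * (-1) ^ (m * m) = 1 := by
  have h2 := Kn_two_mul (2 * m)
  have hb : 2 * m * (2 * m - 1) = (m * (2 * m - 1)) * 2 := by ring
  have hK : Kn (2 * m) = m * (2 * m - 1) :=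
    Nat.eq_of_mul_eq_mul_right (by norm_num) (h2.trans hb)
  rw [← pow_add]
  refine Even.neg_one_pow ?_
  rw [hK]
  rcases Nat.even_or_odd m with he | ho
  · exact (he.mul_right _).add (he.mul_right _)
  · have h2m1 : Odd (2 * m - 1) := by
      obtain ⟨k, hk⟩ := ho
      exact ⟨2 * k, by omega⟩
    exact (ho.mul h2m1).add_odd (ho.mul ho)

lemma charpoly_eval {ι : Type*} [Fintype ι] [DecidableEq ι] (A : Matrix ι ι ℂ) (x : ℂ) :
    A.charpoly.eval x = (x • (1 : Matrix ι ι ℂ) - A).det := by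
  rw [Matrix.charpoly, show (Polynomial.eval x : Polynomial ℂ → ℂ)
    = ⇑(Polynomial.evalRingHom x) from rfl, RingHom.map_det]
  congr 1
  ext i j
  by_cases h : i = j <;>
    simp [h, Matrix.charmatrix_apply, Matrix.one_apply, Matrix.diagonal_apply,
      Matrix.sub_apply, Matrix.smul_apply]

lemma charpoly_blocks {m : ℕ} (N : Matrix (Fin m) (Fin m) ℂ) :
    (Matrix.fromBlocks 0 N Nᵀ 0).charpoly = (Nᵀ * N).charpoly.comp (X ^ 2) := by
  apply Polynomial.eq_of_infinite_eval_eq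
  refine Set.Infinite.mono ?_ ((Set.finite_singleton (0 : ℂ)).infinite_compl)
  intro x hx
  simp only [Set.mem_compl_iff, Set.mem_singleton_iff] at hx
  show Polynomial.eval x _ = Polynomial.eval x _
  rw [charpoly_eval, Polynomial.eval_comp, eval_pow, eval_X, charpoly_eval]
  have hblock : x • (1 : Matrix (Fin m ⊕ Fin m) (Fin m ⊕ Fin m) ℂ) - Matrix.fromBlocks 0 N Nᵀ 0
      = Matrix.fromBlocks (x • 1) (-N) (-Nᵀ) (x • 1) := by
    ext (i | i) (j | j) <;>
      simp [Matrix.fromBlocks, Matrix.one_apply, Matrix.sub_apply, Matrix.smul_apply]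
  letI : Invertible (x • (1 : Matrix (Fin m) (Fin m) ℂ)) :=
    ⟨x⁻¹ • 1, by rw [smul_mul_smul_comm, inv_mul_cancel₀ hx, Matrix.one_mul, one_smul],
      by rw [smul_mul_smul_comm, mul_inv_cancel₀ hx, Matrix.one_mul, one_smul]⟩
  rw [hblock, Matrix.det_fromBlocks₁₁]
  have hinv : ⅟(x • (1 : Matrix (Fin m) (Fin m) ℂ)) = x⁻¹ • 1 := rfl
  rw [hinv]
  have h1 : (-Nᵀ) * (x⁻¹ • (1 : Matrix (Fin m) (Fin m) ℂ)) * (-N) = x⁻¹ • (Nᵀ * N) := by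
    rw [Matrix.mul_smul, Matrix.mul_one, Matrix.smul_mul, neg_mul_neg]
  rw [h1]
  have h2 : (x : ℂ) ^ 2 • (1 : Matrix (Fin m) (Fin m) ℂ) - Nᵀ * N
      = x • (x • (1 : Matrix (Fin m) (Fin m) ℂ) - x⁻¹ • (Nᵀ * N)) := by
    rw [smul_sub, smul_smul, smul_smul, mul_inv_cancel₀ hx, one_smul, ← sq]
  rw [h2, Matrix.det_smul, Matrix.det_smul, Matrix.det_one, mul_one]

theorem stmt14 {m : ℕ} (M : Matrix (Fin m) (Fin m) ℝ) :
    polyDisc (2 * m)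
        (((Matrix.fromBlocks 0 M Mᵀ 0).map (Complex.ofReal : ℝ → ℂ)).charpoly)
      = 2 ^ (2 * m) * ((M.det : ℝ) : ℂ) ^ 2
        * (polyDisc m (((Mᵀ * M).map (Complex.ofReal : ℝ → ℂ)).charpoly)) ^ 2 := by
  set N : Matrix (Fin m) (Fin m) ℂ := M.map Complex.ofReal with hN
  have hmap1 : (Matrix.fromBlocks 0 M Mᵀ 0).map (Complex.ofReal : ℝ → ℂ)
      = Matrix.fromBlocks 0 N Nᵀ 0 := by
    ext (i | i) (j | j) <;>
      simp [Matrix.fromBlocks, Matrix.map_apply, Matrix.transpose_apply, hN]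
  have hmap2 : (Mᵀ * M).map (Complex.ofReal : ℝ → ℂ) = Nᵀ * N := by
    ext i j
    simp [Matrix.mul_apply, Matrix.map_apply, Matrix.transpose_apply, hN]
  rw [hmap1, hmap2]
  set p := (Nᵀ * N).charpoly with hp
  have hmonic : p.Monic := Matrix.charpoly_monic _
  have hdeg : p.natDegree = m := by
    rw [hp, Matrix.charpoly_natDegree_eq_dim, Fintype.card_fin]
  have hsplits : p.Splits := IsAlgClosed.splits p
  have hcard : Multiset.card p.roots = m := by
    have := hsplits.natDegree_eq_card_roots
    rw [← this, hdeg]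
  obtain ⟨μ, hμ⟩ := exists_enum m p.roots hcard
  have hfact : p = ∏ i : Fin m, (X - C (μ i)) := by
    conv_lhs => rw [hsplits.eq_prod_roots_of_monic hmonic, hμ]
    rw [Multiset.map_map, Finset.prod_eq_multiset_prod]
    rfl
  choose σ hσ using fun i => IsAlgClosed.exists_pow_nat_eq (μ i) (n := 2) (by norm_num)
  have hμσ : μ = fun i => σ i ^ 2 := funext fun i => (hσ i).symm
  -- the big characteristic polynomial and its roots
  have hbig : (Matrix.fromBlocks 0 N Nᵀ 0).charpoly
      = (∏ i : Fin m, (X - C (σ i))) * ∏ i : Fin m, (X - C (-σ i)) := by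
    rw [charpoly_blocks, ← hp, hfact, Polynomial.prod_comp, ← Finset.prod_mul_distrib]
    refine Finset.prod_congr rfl fun i _ => ?_
    rw [Polynomial.sub_comp, Polynomial.X_comp, Polynomial.C_comp, ← hσ i, map_pow, map_neg]
    ring
  have hne1 : (∏ i : Fin m, (X - C (σ i))) ≠ 0 :=
    (monic_prod_of_monic _ _ fun i _ => monic_X_sub_C (σ i)).ne_zero
  have hne2 : (∏ i : Fin m, (X - C (-σ i))) ≠ 0 :=
    (monic_prod_of_monic _ _ fun i _ => monic_X_sub_C (-σ i)).ne_zero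
  have hroots : (Matrix.fromBlocks 0 N Nᵀ 0).charpoly.roots
      = Multiset.map (Sum.elim σ fun i => -σ i)
          (Finset.univ.val : Multiset (Fin m ⊕ Fin m)) := by
    rw [hbig, Polynomial.roots_mul (mul_ne_zero hne1 hne2), roots_prod_X_sub_C',
      roots_prod_X_sub_C']
    rw [← Finset.univ_disjSum_univ, Finset.val_disjSum, Multiset.disjSum,
      Multiset.map_add, Multiset.map_map, Multiset.map_map]
    rfl
  -- determinant identity
  have hdetN : N.det = ((M.det : ℝ) : ℂ) := by
    rw [hN, show (Complex.ofReal : ℝ → ℂ) = ⇑Complex.ofRealHom from rfl,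
      ← RingHom.mapMatrix_apply, ← RingHom.map_det]
  have hprodμ : (∏ i, μ i) = ((M.det : ℝ) : ℂ) ^ 2 := by
    have h0 := Matrix.det_eq_sign_charpoly_coeff (Nᵀ * N)
    rw [Polynomial.coeff_zero_eq_eval_zero, ← hp, hfact, Polynomial.eval_prod] at h0
    have he : (∏ i : Fin m, Polynomial.eval 0 (X - C (μ i))) = (-1 : ℂ) ^ m * ∏ i, μ i := by
      calc (∏ i : Fin m, Polynomial.eval 0 (X - C (μ i)))
          = ∏ i : Fin m, (-1 * μ i) := Finset.prod_congr rfl fun i _ => by simp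
        _ = (-1 : ℂ) ^ m * ∏ i, μ i := by
            rw [Finset.prod_mul_distrib, Finset.prod_const, Finset.card_univ, Fintype.card_fin]
    rw [he, Fintype.card_fin, ← mul_assoc, ← pow_add,
      Even.neg_one_pow ⟨m, rfl⟩, one_mul] at h0
    rw [← h0, Matrix.det_mul, Matrix.det_transpose, hdetN, sq]
  -- evaluate both discriminants
  have hLHS : polyDisc (2 * m) (Matrix.fromBlocks 0 N Nᵀ 0).charpoly
      = (-1) ^ Kn (2 * m) * Od (Sum.elim σ fun i => -σ i) :=
    polyDisc_eq _ _ hroots (by simp [two_mul])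
  have hRHS : polyDisc m p = (-1) ^ Kn m * Od μ :=
    polyDisc_eq _ _ hμ (by simp)
  rw [hLHS, hRHS, Od_sum σ, G_split σ]
  have hOdμ : Od μ = Od σ * ∏ i, ∏ j ∈ Finset.univ \ {i}, (σ i + σ j) := by
    rw [hμσ]; exact Od_sq σ
  have hprodσ : (∏ i, σ i) ^ 2 = ((M.det : ℝ) : ℂ) ^ 2 := by
    rw [← hprodμ, ← Finset.prod_pow]
    exact Finset.prod_congr rfl fun i _ => hσ i
  have hsq : ((-1 : ℂ) ^ Kn m) ^ 2 = 1 := by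
    rw [← pow_mul, mul_comm, pow_mul]
    norm_num
  rw [hOdμ]
  set H := ∏ i, ∏ j ∈ Finset.univ \ {i}, (σ i + σ j) with hH
  have expand : (Od σ * (2 ^ m * (∏ i, σ i) * H)) ^ 2
      = (2 ^ m) ^ 2 * (∏ i, σ i) ^ 2 * (Od σ * H) ^ 2 := by ring
  rw [expand, hprodσ, mul_pow ((-1 : ℂ) ^ Kn m), hsq, one_mul]
  have h2pow : ((2 : ℂ) ^ m) ^ 2 = 2 ^ (2 * m) := by
    rw [← pow_mul, mul_comm]
  rw [h2pow, ← mul_assoc, ← mul_assoc, sign_cancel m, one_mul]
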